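/- Let (X(h)) be I.I.D. real random variables bounded by N with all odd moments zero, and |c(h)| ≤ c₀/|h|. Then for all integers k ≥ 1 and reals 1 ≤ y < z with k > y, E(|∑_{y≤|h|<z} c(h)X(h)|^k) ≤ (10 c₀ N log k)^k. -/

import Mathlib

open MeasureTheory ProbabilityTheory Nat

section Aux
variable {Ω : Type*} [MeasureSpace Ω] [IsProbabilityMeasure (ℙ : Measure Ω)]

lemma intg_of_bdd {f : Ω → ℝ} {C : ℝ} (hm : AEStronglyMeasurable f ℙ)
    (hb : ∀ᵐ ω, |f ω| ≤ C) : Integrable f ℙ :=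
  (integrable_const C).mono' hm (by simpa [Real.norm_eq_abs] using hb)

lemma sq_integral_le {f : Ω → ℝ} {C : ℝ} (hm : Measurable f)
    (hb : ∀ᵐ ω, |f ω| ≤ C) : (∫ ω, f ω) ^ 2 ≤ ∫ ω, f ω ^ 2 := by
  have h2 : MemLp f 2 ℙ := (memLp_top_of_bound hm.aestronglyMeasurable C
    (by simpa [Real.norm_eq_abs] using hb)).mono_exponent le_top
  have := variance_nonneg f ℙ
  rw [variance_eq_sub h2] at this
  simpa using this
end Aux

lemma fiber_sum (S : Finset ℤ) (t : Finset ℕ) (q : ℕ → ℝ) (hq : ∀ n, 0 ≤ q n)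
    (hmap : ∀ h ∈ S, h.natAbs ∈ t) :
    ∑ h ∈ S, q h.natAbs ≤ 2 * ∑ n ∈ t, q n := by
  classical
  rw [← Finset.sum_fiberwise_of_maps_to hmap (fun h => q h.natAbs), Finset.mul_sum]
  refine Finset.sum_le_sum fun n _ => ?_
  have h1 : ∑ h ∈ S.filter (fun h => h.natAbs = n), q h.natAbs
      = (S.filter (fun h => h.natAbs = n)).card • q n := by
    rw [← Finset.sum_const]
    refine Finset.sum_congr rfl fun h hh => ?_
    rw [(Finset.mem_filter.1 hh).2]
  rw [h1]
  have hcard : (S.filter (fun h => h.natAbs = n)).card ≤ 2 := by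
    have hsub : S.filter (fun h => h.natAbs = n) ⊆ {(n : ℤ), -(n : ℤ)} := by
      intro h hh
      have := (Finset.mem_filter.1 hh).2
      rw [Finset.mem_insert, Finset.mem_singleton]
      omega
    exact (Finset.card_le_card hsub).trans ((Finset.card_insert_le _ _).trans (by simp))
  calc (S.filter (fun h => h.natAbs = n)).card • q n
      ≤ 2 * q n := by
        rw [nsmul_eq_mul]
        exact mul_le_mul_of_nonneg_right (by exact_mod_cast hcard) (hq n)

lemma harmonic_le (m : ℕ) : ∑ n ∈ Finset.Icc 1 m, (1 / (n : ℝ)) ≤ 1 + Real.log m := by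
  induction m with
  | zero => simp
  | succ m ih =>
    rcases Nat.eq_zero_or_pos m with hm | hm
    · subst hm; simp
    · rw [Finset.sum_Icc_succ_top (by omega : 1 ≤ m + 1)]
      have hlog : 1 / ((m : ℝ) + 1) ≤ Real.log (m + 1) - Real.log m := by
        have hmpos : (0:ℝ) < m := by exact_mod_cast hm
        have h1 : Real.log ((m : ℝ) / (m + 1)) ≤ (m : ℝ) / (m + 1) - 1 :=
          Real.log_le_sub_one_of_pos (by positivity)
        rw [Real.log_div (by positivity) (by positivity)] at h1
        have : (m : ℝ) / (m + 1) - 1 = -(1 / (m + 1)) := by field_simp; ring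
        rw [this] at h1
        linarith
      push_cast at hlog ⊢
      linarith

lemma telescope_sq (K : ℕ) (hK : 1 ≤ K) :
    ∀ d : ℕ, ∑ n ∈ Finset.Icc (K + 1) (K + d), (1 / (n : ℝ) ^ 2) ≤ 1 / (K:ℝ) - 1 / ((K:ℝ) + (d:ℕ)) := by
  intro d
  induction d with
  | zero => simp
  | succ d ih =>
    have : K + (d+1) = (K + d) + 1 := by omega
    rw [this, Finset.sum_Icc_succ_top (by omega : K + 1 ≤ K + d + 1)]
    have hKd : (0:ℝ) < (K:ℝ) + d := by
      have : (1:ℝ) ≤ (K:ℝ) := by exact_mod_cast hK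
      linarith
    have key : (1:ℝ) / ((K + d : ℕ) + 1) ^ 2 ≤ 1 / ((K:ℝ) + d) - 1 / ((K + d : ℕ) + 1) := by
      push_cast
      rw [div_sub_div _ _ (by positivity) (by positivity)]
      rw [div_le_div_iff₀ (by positivity) (by positivity)]
      ring_nf
      nlinarith [sq_nonneg ((K:ℝ) + d)]
    push_cast at ih key ⊢
    have harr : ((K:ℝ) + ((d:ℝ) + 1)) = (K:ℝ) + (d:ℝ) + 1 := by ring
    rw [harr]
    linarith

lemma sum_inv_sq_le (K M : ℕ) (hK : 1 ≤ K) :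
    ∑ n ∈ Finset.Icc K M, (1 / (n : ℝ) ^ 2) ≤ 1 / (K:ℝ) ^ 2 + 1 / (K:ℝ) := by
  rcases le_or_gt K M with hKM | hKM
  · have hsplit : Finset.Icc K M = insert K (Finset.Icc (K+1) M) := by
      ext x; simp [Finset.mem_Icc, Finset.mem_insert]; omega
    rw [hsplit, Finset.sum_insert (by simp)]
    have : Finset.Icc (K+1) M = Finset.Icc (K+1) (K + (M - K)) := by
      congr 1; omega
    rw [this]
    have := telescope_sq K hK (M - K)
    have hKd : (0:ℝ) < (K:ℝ) + (M - K : ℕ) := by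
      have : (1:ℝ) ≤ (K:ℝ) := by exact_mod_cast hK
      positivity
    have h0 : (0:ℝ) ≤ 1 / ((K:ℝ) + (M - K : ℕ)) := by positivity
    push_cast at this ⊢
    linarith
  · have : Finset.Icc K M = ∅ := by
      rw [Finset.Icc_eq_empty]; omega
    rw [this]
    simp
    positivity


lemma fact_two_mul_ge (b : ℕ) : 2 ^ b * b ! ≤ (2 * b)! := by
  cases b with
  | zero => simp
  | succ m =>
    have e1 : (2*(m+1))‼ = 2^(m+1) * (m+1)! := Nat.doubleFactorial_two_mul _
    have e2 : (2*(m+1))! = (2*(m+1))‼ * (2*(m+1)-1)‼ := by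
      have h1 : 2*(m+1) = (2*m+1)+1 := by omega
      calc (2*(m+1))! = ((2*m+1)+1)! := by rw [h1]
        _ = ((2*m+1)+1)‼ * (2*m+1)‼ := Nat.factorial_eq_mul_doubleFactorial _
        _ = (2*(m+1))‼ * (2*(m+1)-1)‼ := by rw [← h1]; congr 1
    rw [e2, e1]
    exact Nat.le_mul_of_pos_right _ (Nat.doubleFactorial_pos _)

lemma multinomial_double_le {F : Finset ℤ} {β : ℤ → ℕ} {k : ℕ}
    (hsum : ∑ h ∈ F, β h = k) :
    Nat.multinomial F (fun h => 2 * β h) ≤ (2 * k - 1)‼ * Nat.multinomial F β := by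
  rcases Nat.eq_zero_or_pos k with hk | hk
  · subst hk
    have hz : ∀ h ∈ F, β h = 0 := fun h hh => (Finset.sum_eq_zero_iff).1 hsum h hh
    have key : ∀ g : ℤ → ℕ, (∀ h ∈ F, g h = 0) → Nat.multinomial F g = 1 := by
      intro g hg
      unfold Nat.multinomial
      rw [Finset.sum_congr rfl hg, Finset.sum_const_zero,
        Finset.prod_congr rfl (fun h hh => by rw [hg h hh])]
      simp
    have h1 : Nat.multinomial F (fun h => 2 * β h) = 1 :=
      key _ (fun h hh => by rw [hz h hh, mul_zero])
    have h2 : Nat.multinomial F β = 1 := key _ hz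
    simp [h1, h2]
  · have hQpos : 0 < ∏ h ∈ F, (2 * β h)! := Finset.prod_pos fun h _ => Nat.factorial_pos _
    refine Nat.le_of_mul_le_mul_left ?_ hQpos
    have spec2 := Nat.multinomial_spec F (fun h => 2 * β h)
    have spec1 := Nat.multinomial_spec F β
    rw [hsum] at spec1
    have hsum2 : ∑ h ∈ F, 2 * β h = 2 * k := by
      rw [← Finset.mul_sum, hsum]
    rw [spec2, hsum2]
    have hfacteq : (2 * k)! = (2 * k - 1)‼ * (2 ^ k * k !) := by
      have h1 : 2 * k = (2 * k - 1) + 1 := by omega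
      rw [h1, Nat.factorial_eq_mul_doubleFactorial]
      have : 2 * k - 1 + 1 = 2 * k := by omega
      rw [this, Nat.doubleFactorial_two_mul, mul_comm]
    rw [hfacteq]
    have hQge : 2 ^ k * (∏ h ∈ F, (β h)!) ≤ ∏ h ∈ F, (2 * β h)! := by
      calc 2 ^ k * (∏ h ∈ F, (β h)!) = ∏ h ∈ F, (2 ^ β h * (β h)!) := by
            rw [Finset.prod_mul_distrib, Finset.prod_pow_eq_pow_sum, hsum]
        _ ≤ ∏ h ∈ F, (2 * β h)! := Finset.prod_le_prod' fun h _ => fact_two_mul_ge (β h)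
    calc (2 * k - 1)‼ * (2 ^ k * k !)
        = (2 * k - 1)‼ * (2 ^ k * ((∏ h ∈ F, (β h)!) * Nat.multinomial F β)) := by
          rw [← spec1]
      _ = (2 ^ k * (∏ h ∈ F, (β h)!)) * ((2 * k - 1)‼ * Nat.multinomial F β) := by ring
      _ ≤ (∏ h ∈ F, (2 * β h)!) * ((2 * k - 1)‼ * Nat.multinomial F β) :=
          Nat.mul_le_mul_right _ hQge

lemma doubleFactorial_le_pow (k : ℕ) (hk : 1 ≤ k) : ((2 * k - 1)‼ : ℝ) ≤ (k : ℝ) ^ k := by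
  induction k with
  | zero => omega
  | succ m ih =>
    rcases Nat.eq_zero_or_pos m with hm | hm
    · subst hm; norm_num
    · have hdf : (2 * (m + 1) - 1)‼ = (2 * m + 1) * (2 * m - 1)‼ := by
        have h1 : 2 * (m + 1) - 1 = (2 * m - 1) + 2 := by omega
        rw [h1, Nat.doubleFactorial_add_two]
        congr 1
        omega
      rw [hdf]
      push_cast
      have ihm := ih hm
      have hmR : (1:ℝ) ≤ (m:ℝ) := by exact_mod_cast hm
      have hb : (2:ℝ) * (m:ℝ)^m ≤ ((m:ℝ) + 1)^m := by
        have h1 : (1 + (1:ℝ)/m) ^ m ≥ 1 + (m:ℝ) * (1/m) := by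
          apply one_add_mul_le_pow
          have : (0:ℝ) < 1/m := by positivity
          linarith
        have h2 : (m:ℝ) * (1/m) = 1 := by field_simp
        rw [h2] at h1
        have h3 : ((m:ℝ) + 1)^m = (1 + 1/m)^m * (m:ℝ)^m := by
          rw [← mul_pow]
          congr 1
          field_simp
        rw [h3]
        nlinarith [pow_pos (show (0:ℝ) < m by linarith) m]
      have hdfnn : (0:ℝ) ≤ ((2 * m - 1)‼ : ℝ) := by positivity
      have hmm : (0:ℝ) ≤ (m:ℝ)^m := by positivity
      calc ((2*m : ℝ) + 1) * ((2 * m - 1)‼ : ℝ) ≤ ((2*m:ℝ) + 1) * (m:ℝ)^m := by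
            apply mul_le_mul_of_nonneg_left ihm (by linarith)
        _ ≤ ((m:ℝ) + 1) * ((m:ℝ)+1)^m := by nlinarith
        _ = ((m:ℝ) + 1)^(m+1) := by ring


section C
variable {Ω : Type*} [MeasureSpace Ω] [IsProbabilityMeasure (ℙ : Measure Ω)]


lemma integral_finset_prod_indep
    (Y : ℤ → Ω → ℝ) (hmeas : ∀ h, Measurable (Y h))
    (hind : iIndepFun Y) (F : Finset ℤ) :
    ∫ ω, ∏ h ∈ F, Y h ω = ∏ h ∈ F, ∫ ω, Y h ω := by
  classical
  induction F using Finset.cons_induction with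
  | empty => simp
  | cons a F ha ih =>
    have hindep : IndepFun (∏ h ∈ F, Y h) (Y a) ℙ :=
      hind.indepFun_finsetProd_of_notMem hmeas ha
    have hmF : AEStronglyMeasurable (∏ h ∈ F, Y h) ℙ := by
      have := (F.measurable_prod (fun h _ => hmeas h)).aestronglyMeasurable (μ := ℙ)
      apply this.congr
      filter_upwards with ω
      simp [Finset.prod_apply]
    have key := hindep.symm.integral_mul_eq_mul_integral (hmeas a).aestronglyMeasurable hmF
    have h1 : (Y a * ∏ h ∈ F, Y h) = fun ω => ∏ h ∈ Finset.cons a F ha, Y h ω := by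
      ext ω
      rw [Finset.prod_cons]
      simp [Finset.prod_apply]
    rw [h1] at key
    have h2 : integral ℙ (∏ h ∈ F, Y h) = ∫ ω, ∏ h ∈ F, Y h ω := by
      apply integral_congr_ae
      filter_upwards with ω
      simp [Finset.prod_apply]
    rw [key, h2, ih, Finset.prod_cons]

end C


section D
variable {Ω : Type*} [MeasureSpace Ω] [IsProbabilityMeasure (ℙ : Measure Ω)]


lemma even_moment (N : ℝ) (hN : 0 ≤ N) (X : ℤ → Ω → ℝ) (hmeas : ∀ h, Measurable (X h))
    (hind : iIndepFun X)
    (hbd : ∀ h, ∀ᵐ ω, |X h ω| ≤ N)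
    (hodd : ∀ h ℓ, ∫ ω, (X h ω) ^ (2*ℓ+1) = 0)
    (F : Finset ℤ) (a : ℤ → ℝ) (k : ℕ) :
    ∫ ω, (∑ h ∈ F, a h * X h ω) ^ (2*k)
      ≤ ((2*k-1)‼ : ℝ) * (N^2 * ∑ h ∈ F, a h ^ 2)^k := by
  classical
  have hall : ∀ᵐ ω, ∀ h : ℤ, |X h ω| ≤ N := ae_all_iff.2 hbd
  -- pointwise expansion
  have expand : ∀ ω, (∑ h ∈ F, a h * X h ω) ^ (2*k)
      = ∑ μ ∈ Finset.piAntidiag F (2*k),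
          ((Nat.multinomial F μ : ℝ) * ∏ h ∈ F, (a h)^(μ h)) * ∏ h ∈ F, (X h ω)^(μ h) := by
    intro ω
    rw [Finset.sum_pow_eq_sum_piAntidiag]
    refine Finset.sum_congr rfl fun μ _ => ?_
    rw [mul_assoc, ← Finset.prod_mul_distrib]
    congr 1
    exact Finset.prod_congr rfl fun h _ => mul_pow _ _ _
  have hintX : ∀ (μ : ℤ → ℕ), Integrable (fun ω => ∏ h ∈ F, (X h ω)^(μ h)) ℙ := by
    intro μ
    refine intg_of_bdd (F.measurable_prod (fun h _ =>
      (hmeas h).pow_const (μ h))).aestronglyMeasurable (C := ∏ h ∈ F, N^(μ h)) ?_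
    filter_upwards [hall] with ω hω
    rw [Finset.abs_prod]
    refine Finset.prod_le_prod (fun h _ => abs_nonneg _) fun h _ => ?_
    rw [abs_pow]
    exact pow_le_pow_left₀ (abs_nonneg _) (hω h) _
  have hintX1 : ∀ (h : ℤ) (n : ℕ), Integrable (fun ω => (X h ω)^n) ℙ := by
    intro h n
    refine intg_of_bdd ((hmeas h).pow_const n).aestronglyMeasurable (C := N^n) ?_
    filter_upwards [hbd h] with ω hω
    rw [abs_pow]
    exact pow_le_pow_left₀ (abs_nonneg _) hω _
  have hI : ∀ μ : ℤ → ℕ, ∫ ω, ∏ h ∈ F, (X h ω)^(μ h) = ∏ h ∈ F, ∫ ω, (X h ω)^(μ h) :=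
    fun μ => integral_finset_prod_indep (fun h ω => X h ω ^ μ h)
      (fun h => (hmeas h).pow_const _)
      (hind.comp (fun h x => x ^ μ h) (fun h => measurable_id.pow_const _)) F
  have step1 : ∫ ω, (∑ h ∈ F, a h * X h ω) ^ (2*k)
      = ∑ μ ∈ Finset.piAntidiag F (2*k),
          ((Nat.multinomial F μ : ℝ) * ∏ h ∈ F, (a h)^(μ h))
            * ∏ h ∈ F, ∫ ω, (X h ω)^(μ h) := by
    rw [integral_congr_ae (Filter.Eventually.of_forall expand)]
    rw [integral_finset_sum _ (fun μ _ => (hintX μ).const_mul _)]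
    exact Finset.sum_congr rfl fun μ _ => by rw [integral_const_mul, hI μ]
  set P := Finset.piAntidiag F (2*k) with hP
  set Evn : (ℤ → ℕ) → Prop := fun μ => ∀ h ∈ F, Even (μ h) with hEvn
  have hsplit : ∑ μ ∈ P, ((Nat.multinomial F μ : ℝ) * ∏ h ∈ F, (a h)^(μ h))
            * ∏ h ∈ F, ∫ ω, (X h ω)^(μ h)
      = ∑ μ ∈ P.filter Evn, ((Nat.multinomial F μ : ℝ) * ∏ h ∈ F, (a h)^(μ h))
            * ∏ h ∈ F, ∫ ω, (X h ω)^(μ h) := by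
    rw [← Finset.sum_filter_add_sum_filter_not P Evn]
    have : ∑ μ ∈ P.filter (fun μ => ¬ Evn μ), ((Nat.multinomial F μ : ℝ)
        * ∏ h ∈ F, (a h)^(μ h)) * ∏ h ∈ F, ∫ ω, (X h ω)^(μ h) = 0 := by
      refine Finset.sum_eq_zero fun μ hμ => ?_
      obtain ⟨hμP, hodd'⟩ := Finset.mem_filter.1 hμ
      simp only [hEvn] at hodd'
      push_neg at hodd'
      obtain ⟨h₀, h₀F, h₀odd⟩ := hodd'
      rw [Nat.not_even_iff_odd] at h₀odd
      obtain ⟨ℓ, hℓ⟩ := h₀odd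
      have hz : ∫ ω, (X h₀ ω)^(μ h₀) = 0 := by rw [hℓ]; exact hodd h₀ ℓ
      have hz2 : (∏ h ∈ F, ∫ ω, (X h ω)^(μ h)) = 0 := Finset.prod_eq_zero h₀F hz
      rw [hz2, mul_zero]
    rw [this, add_zero]
  have himage : P.filter Evn = (Finset.piAntidiag F k).image (fun β h => 2 * β h) := by
    ext μ
    simp only [Finset.mem_filter, Finset.mem_image, Finset.mem_piAntidiag, hP, hEvn]
    constructor
    · rintro ⟨⟨hsum, hsupp⟩, hev⟩
      refine ⟨fun h => μ h / 2, ⟨?_, ?_⟩, ?_⟩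
      · show ∑ h ∈ F, μ h / 2 = k
        have hsum' : ∑ h ∈ F, μ h = 2 * k := hsum
        have heq : ∑ h ∈ F, μ h = 2 * ∑ h ∈ F, (μ h / 2) := by
          rw [Finset.mul_sum]
          refine Finset.sum_congr rfl fun h hh => ?_
          obtain ⟨t, ht⟩ := hev h hh
          omega
        omega
      · intro h hne
        refine hsupp h ?_
        have hne' : μ h / 2 ≠ 0 := hne
        omega
      · funext h
        show 2 * (μ h / 2) = μ h
        by_cases hF : h ∈ F
        · obtain ⟨t, ht⟩ := hev h hF
          omega
        · have : μ h = 0 := by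
            by_contra hne
            exact hF (hsupp h hne)
          omega
    · rintro ⟨β, ⟨hsum, hsupp⟩, rfl⟩
      refine ⟨⟨?_, fun h hne => hsupp h (by
        have hne' : 2 * β h ≠ 0 := hne
        omega)⟩, fun h _ => ⟨β h, by show 2 * β h = β h + β h; omega⟩⟩
      show ∑ h ∈ F, 2 * β h = 2 * k
      rw [← Finset.mul_sum, hsum]
  have hinj : ∀ x ∈ Finset.piAntidiag F k, ∀ y ∈ Finset.piAntidiag F k,
      (fun β (h : ℤ) => 2 * β h) x = (fun β (h : ℤ) => 2 * β h) y → x = y := by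
    intro x _ y _ e
    funext h
    have e2 := congrFun e h
    dsimp only at e2
    omega
  rw [step1, hsplit, himage, Finset.sum_image hinj]
  have hperterm : ∀ β ∈ Finset.piAntidiag F k,
      ((Nat.multinomial F (fun h => 2 * β h) : ℝ) * ∏ h ∈ F, (a h)^(2 * β h))
          * ∏ h ∈ F, ∫ ω, (X h ω)^(2 * β h)
        ≤ ((2*k-1)‼ : ℝ) * ((Nat.multinomial F β : ℝ)
            * (∏ h ∈ F, (a h ^ 2)^(β h)) * N^(2*k)) := by
    intro β hβ
    obtain ⟨hβsum, -⟩ := Finset.mem_piAntidiag.1 hβ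
    have h1 : (Nat.multinomial F (fun h => 2 * β h) : ℝ)
        ≤ ((2*k-1)‼ : ℝ) * (Nat.multinomial F β : ℝ) := by
      exact_mod_cast multinomial_double_le hβsum
    have h2 : ∏ h ∈ F, (a h)^(2 * β h) = ∏ h ∈ F, (a h ^ 2)^(β h) :=
      Finset.prod_congr rfl fun h _ => by rw [← pow_mul]
    have h2' : (0:ℝ) ≤ ∏ h ∈ F, (a h ^ 2)^(β h) :=
      Finset.prod_nonneg fun h _ => pow_nonneg (sq_nonneg _) _
    have h3 : (0:ℝ) ≤ ∏ h ∈ F, ∫ ω, (X h ω)^(2 * β h) := by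
      refine Finset.prod_nonneg fun h _ => integral_nonneg fun ω => ?_
      rw [pow_mul]
      exact pow_nonneg (sq_nonneg _) _
    have h4 : ∏ h ∈ F, ∫ ω, (X h ω)^(2 * β h) ≤ N^(2*k) := by
      have : ∀ h ∈ F, ∫ ω, (X h ω)^(2 * β h) ≤ N^(2 * β h) := by
        intro h _
        have hb1 : ∫ ω, (X h ω)^(2 * β h) ≤ ∫ (_ : Ω), N^(2 * β h) := by
          refine integral_mono_ae (hintX1 h _) (integrable_const _) ?_
          filter_upwards [hbd h] with ω hω
          calc (X h ω)^(2 * β h) ≤ |(X h ω)^(2 * β h)| := le_abs_self _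
            _ = |X h ω|^(2 * β h) := abs_pow _ _
            _ ≤ N^(2 * β h) := pow_le_pow_left₀ (abs_nonneg _) hω _
        simpa using hb1
      calc ∏ h ∈ F, ∫ ω, (X h ω)^(2 * β h) ≤ ∏ h ∈ F, N^(2 * β h) := by
            refine Finset.prod_le_prod (fun h _ => ?_) this
            refine integral_nonneg fun ω => ?_
            rw [pow_mul]; exact pow_nonneg (sq_nonneg _) _
        _ = N ^ (∑ h ∈ F, 2 * β h) := Finset.prod_pow_eq_pow_sum _ _ _
        _ = N ^ (2*k) := by rw [← Finset.mul_sum, hβsum]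
    rw [h2]
    have hmβ : (0:ℝ) ≤ (Nat.multinomial F β : ℝ) := Nat.cast_nonneg _
    calc (Nat.multinomial F (fun h => 2 * β h) : ℝ) * (∏ h ∈ F, (a h ^ 2)^(β h))
          * ∏ h ∈ F, ∫ ω, (X h ω)^(2 * β h)
        ≤ (((2*k-1)‼ : ℝ) * (Nat.multinomial F β : ℝ)) * (∏ h ∈ F, (a h ^ 2)^(β h))
          * N^(2*k) := by
          refine mul_le_mul (mul_le_mul_of_nonneg_right h1 h2') h4 h3 ?_
          positivity
      _ = ((2*k-1)‼ : ℝ) * ((Nat.multinomial F β : ℝ)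
            * (∏ h ∈ F, (a h ^ 2)^(β h)) * N^(2*k)) := by ring
  calc ∑ β ∈ Finset.piAntidiag F k,
        ((Nat.multinomial F (fun h => 2 * β h) : ℝ) * ∏ h ∈ F, (a h)^(2 * β h))
          * ∏ h ∈ F, ∫ ω, (X h ω)^(2 * β h)
      ≤ ∑ β ∈ Finset.piAntidiag F k, ((2*k-1)‼ : ℝ) * ((Nat.multinomial F β : ℝ)
            * (∏ h ∈ F, (a h ^ 2)^(β h)) * N^(2*k)) := Finset.sum_le_sum hperterm
    _ = ((2*k-1)‼ : ℝ) * (N^2 * ∑ h ∈ F, a h ^ 2)^k := by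
        rw [← Finset.mul_sum]
        congr 1
        rw [mul_pow, ← pow_mul]
        rw [Finset.sum_pow_eq_sum_piAntidiag F (fun h => a h ^ 2) k, Finset.mul_sum]
        refine Finset.sum_congr rfl fun β _ => by ring
end D


set_option maxHeartbeats 2000000 in
theorem moment_bound_small_y
    {Ω : Type*} [MeasureSpace Ω] [IsProbabilityMeasure (ℙ : Measure Ω)]
    (N c₀ : ℝ) (hN : 0 < N) (hc₀ : 0 < c₀)
    (X : ℤ → Ω → ℝ)
    (hmeas : ∀ h, Measurable (X h))
    (hind : iIndepFun X)
    (hid : ∀ h h' : ℤ, IdentDistrib (X h) (X h'))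
    (hbd : ∀ h : ℤ, ∀ᵐ ω, |X h ω| ≤ N)
    (hodd : ∀ h : ℤ, ∀ ℓ : ℕ, ∫ ω, (X h ω) ^ (2 * ℓ + 1) = 0)
    (c : ℤ → ℂ) (hc : ∀ h : ℤ, h ≠ 0 → ‖c h‖ ≤ c₀ / |(h : ℝ)|)
    (y z : ℝ) (hy : 1 ≤ y) (hyz : y < z) (k : ℕ) (hk : 1 ≤ k) (hky : y < k) :
    ∫ ω, ‖∑ h ∈ (Finset.Icc (-⌈z⌉ : ℤ) ⌈z⌉).filter
          (fun h : ℤ => y ≤ |(h : ℝ)| ∧ |(h : ℝ)| < z),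
        c h * (X h ω : ℂ)‖ ^ k
      ≤ (10 * c₀ * N * Real.log k) ^ k := by
  classical
  have hall : ∀ᵐ ω, ∀ h : ℤ, |X h ω| ≤ N := ae_all_iff.2 hbd
  -- basic numbers
  have hk2 : 2 ≤ k := by
    by_contra hcon
    interval_cases k
    · exact absurd hky (by simp; linarith)
  have hkR : (2:ℝ) ≤ (k:ℝ) := by exact_mod_cast hk2
  have hkpos : (0:ℝ) < (k:ℝ) := by linarith
  have hlog2 : (2:ℝ)/3 ≤ Real.log 2 := by
    rw [Real.le_log_iff_exp_le (by norm_num : (0:ℝ) < 2)]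
    have he1 : Real.exp 1 < 2.7182818286 := Real.exp_one_lt_d9
    have he1p : (0:ℝ) < Real.exp 1 := Real.exp_pos 1
    have hexp2 : Real.exp 2 ≤ 8 := by
      have : Real.exp 2 = Real.exp 1 * Real.exp 1 := by
        rw [← Real.exp_add]; norm_num
      rw [this]; nlinarith
    have hcube : Real.exp (2/3) ^ 3 = Real.exp 2 := by
      rw [← Real.exp_nat_mul]; norm_num
    have : Real.exp (2/3) ^ 3 ≤ 2 ^ 3 := by rw [hcube]; norm_num; linarith
    exact le_of_pow_le_pow_left₀ (by norm_num) (by norm_num) this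
  have hL2 : Real.log 2 ≤ Real.log k := Real.log_le_log (by norm_num) hkR
  set L := Real.log k with hLdef
  have hL : (2:ℝ)/3 ≤ L := le_trans hlog2 hL2
  have hLpos : 0 < L := by linarith
  -- the finsets
  set F := (Finset.Icc (-⌈z⌉ : ℤ) ⌈z⌉).filter
      (fun h : ℤ => y ≤ |(h : ℝ)| ∧ |(h : ℝ)| < z) with hFdef
  have hFne : ∀ h ∈ F, h ≠ 0 ∧ (1:ℝ) ≤ |(h:ℝ)| := by
    intro h hh
    obtain ⟨-, hy1, -⟩ := Finset.mem_filter.1 hh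
    refine ⟨?_, le_trans hy hy1⟩
    intro h0
    rw [h0] at hy1
    simp at hy1
    linarith
  set Fh := F.filter (fun h : ℤ => |(h:ℝ)| < (k:ℝ)) with hFhdef
  set Ft := F.filter (fun h : ℤ => ¬ |(h:ℝ)| < (k:ℝ)) with hFtdef
  -- abbreviations
  set S := fun ω => ∑ h ∈ Fh, c h * (X h ω : ℂ) with hSdef
  set U := fun ω => ∑ h ∈ Ft, c h * (X h ω : ℂ) with hUdef
  have hsum_split : ∀ ω, (∑ h ∈ F, c h * (X h ω : ℂ)) = S ω + U ω := by
    intro ω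
    rw [hSdef, hUdef]
    exact (Finset.sum_filter_add_sum_filter_not F _ _).symm
  -- measurability
  have hmsum : ∀ G : Finset ℤ, Measurable (fun ω => ∑ h ∈ G, c h * (X h ω : ℂ)) := by
    intro G
    exact Finset.measurable_sum _ fun h _ =>
      (measurable_const.mul (Complex.measurable_ofReal.comp (hmeas h)))
  have hmabs : ∀ (G : Finset ℤ) (m : ℕ),
      Measurable (fun ω => ‖∑ h ∈ G, c h * (X h ω : ℂ)‖ ^ m) := by
    intro G m
    exact ((continuous_norm.measurable.comp (hmsum G)).pow_const m)
  -- a.e. bounds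
  have habs : ∀ G : Finset ℤ, ∀ᵐ ω,
      ‖∑ h ∈ G, c h * (X h ω : ℂ)‖ ≤ (∑ h ∈ G, ‖c h‖) * N := by
    intro G
    filter_upwards [hall] with ω hω
    calc ‖∑ h ∈ G, c h * (X h ω : ℂ)‖
        ≤ ∑ h ∈ G, ‖c h * (X h ω : ℂ)‖ := norm_sum_le _ _
      _ = ∑ h ∈ G, ‖c h‖ * |X h ω| := by
          refine Finset.sum_congr rfl fun h _ => ?_
          rw [norm_mul, Complex.norm_real, Real.norm_eq_abs]
      _ ≤ ∑ h ∈ G, ‖c h‖ * N :=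
          Finset.sum_le_sum fun h _ =>
            mul_le_mul_of_nonneg_left (hω h) (norm_nonneg _)
      _ = (∑ h ∈ G, ‖c h‖) * N := (Finset.sum_mul _ _ _).symm
  have hint : ∀ (G : Finset ℤ) (m : ℕ),
      Integrable (fun ω => ‖∑ h ∈ G, c h * (X h ω : ℂ)‖ ^ m) ℙ := by
    intro G m
    refine intg_of_bdd (hmabs G m).aestronglyMeasurable
      (C := ((∑ h ∈ G, ‖c h‖) * N)^m) ?_
    filter_upwards [habs G] with ω hω
    rw [abs_of_nonneg (pow_nonneg (norm_nonneg _) _)]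
    exact pow_le_pow_left₀ (norm_nonneg _) hω _
  -- Step A : splitting
  have stepA : ∫ ω, ‖∑ h ∈ F, c h * (X h ω : ℂ)‖ ^ k
      ≤ 2^(k-1) * ((∫ ω, ‖S ω‖ ^ k) + ∫ ω, ‖U ω‖ ^ k) := by
    have hpt : ∀ ω, ‖∑ h ∈ F, c h * (X h ω : ℂ)‖ ^ k
        ≤ 2^(k-1) * (‖S ω‖ ^ k + ‖U ω‖ ^ k) := by
      intro ω
      calc ‖∑ h ∈ F, c h * (X h ω : ℂ)‖ ^ k
          = ‖S ω + U ω‖ ^ k := by rw [hsum_split ω]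
        _ ≤ (‖S ω‖ + ‖U ω‖) ^ k :=
            pow_le_pow_left₀ (norm_nonneg _) (norm_add_le _ _) _
        _ ≤ 2^(k-1) * (‖S ω‖ ^ k + ‖U ω‖ ^ k) :=
            add_pow_le (norm_nonneg _) (norm_nonneg _) _
    have hintSU : Integrable (fun ω => 2^(k-1) *
        (‖S ω‖ ^ k + ‖U ω‖ ^ k)) ℙ :=
      (((hint Fh k).add (hint Ft k)).const_mul _)
    calc ∫ ω, ‖∑ h ∈ F, c h * (X h ω : ℂ)‖ ^ k
        ≤ ∫ ω, 2^(k-1) * (‖S ω‖ ^ k + ‖U ω‖ ^ k) :=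
          integral_mono_ae (hint F k) hintSU (Filter.Eventually.of_forall hpt)
      _ = 2^(k-1) * ((∫ ω, ‖S ω‖ ^ k) + ∫ ω, ‖U ω‖ ^ k) := by
          rw [integral_const_mul, integral_add (hint Fh k) (hint Ft k)]
  -- Step B : head estimate
  set HSum := ∑ h ∈ Fh, 1 / |(h:ℝ)| with hHSdef
  have hHSnn : 0 ≤ HSum := Finset.sum_nonneg fun h _ => by positivity
  have hheadpt : ∀ᵐ ω, ‖S ω‖ ≤ c₀ * N * HSum := by
    filter_upwards [hall] with ω hω
    calc ‖S ω‖ ≤ ∑ h ∈ Fh, ‖c h * (X h ω : ℂ)‖ :=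
          norm_sum_le _ _
      _ ≤ ∑ h ∈ Fh, (c₀ * N) * (1 / |(h:ℝ)|) := by
          refine Finset.sum_le_sum fun h hh => ?_
          obtain ⟨hne, h1⟩ := hFne h (Finset.mem_filter.1 hh).1
          rw [norm_mul, Complex.norm_real, Real.norm_eq_abs]
          have habs0 : (0:ℝ) < |(h:ℝ)| := by linarith
          calc ‖c h‖ * |X h ω| ≤ (c₀ / |(h:ℝ)|) * N := by
                refine mul_le_mul (hc h hne) (hω h) (abs_nonneg _) ?_
                positivity
            _ = (c₀ * N) * (1 / |(h:ℝ)|) := by ring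
      _ = c₀ * N * HSum := by rw [hHSdef, ← Finset.mul_sum]
  have hheadint : ∫ ω, ‖S ω‖ ^ k ≤ (c₀ * N * HSum) ^ k := by
    have h1 : ∫ ω, ‖S ω‖ ^ k ≤ ∫ (_ : Ω), (c₀ * N * HSum) ^ k := by
      refine integral_mono_ae (hint Fh k) (integrable_const _) ?_
      filter_upwards [hheadpt] with ω hω
      exact pow_le_pow_left₀ (norm_nonneg _) hω _
    simpa using h1
  have hHSle : HSum ≤ 2 * (1 + L) := by
    have hnatabs : ∀ h : ℤ, ((h.natAbs : ℕ) : ℝ) = |(h:ℝ)| := by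
      intro h
      rw [Nat.cast_natAbs, Int.cast_abs]
    have hcast : ∀ h ∈ Fh, 1 / |(h:ℝ)| = (fun n : ℕ => 1/(n:ℝ)) h.natAbs := by
      intro h hh
      rw [← hnatabs h]
    have h1 : HSum = ∑ h ∈ Fh, (fun n : ℕ => 1/(n:ℝ)) h.natAbs :=
      Finset.sum_congr rfl hcast
    have hmap : ∀ h ∈ Fh, h.natAbs ∈ Finset.Icc 1 (k-1) := by
      intro h hh
      obtain ⟨hhF, hlt⟩ := Finset.mem_filter.1 hh
      obtain ⟨hne, h1'⟩ := hFne h hhF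
      have hnat : ((h.natAbs : ℕ) : ℝ) = |(h:ℝ)| := hnatabs h
      have hge : (1:ℝ) ≤ (h.natAbs : ℝ) := by rw [hnat]; exact h1'
      have hlt' : ((h.natAbs : ℕ) : ℝ) < (k:ℝ) := by rw [hnat]; exact hlt
      have : h.natAbs < k := by exact_mod_cast hlt'
      have : 1 ≤ h.natAbs := by exact_mod_cast hge
      rw [Finset.mem_Icc]
      omega
    have h2 := fiber_sum Fh (Finset.Icc 1 (k-1)) (fun n => 1/(n:ℝ))
      (fun n => by positivity) hmap
    have h3 := harmonic_le (k-1)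
    have h4 : Real.log (k-1 : ℕ) ≤ L := by
      rw [hLdef]
      rcases eq_or_lt_of_le hk2 with h | h
      · rw [← h]
        simp
        exact Real.log_nonneg (by norm_num)
      · refine Real.log_le_log (by exact_mod_cast by omega : (0:ℝ) < ((k-1:ℕ):ℝ)) ?_
        exact_mod_cast by omega
    rw [h1]
    calc ∑ h ∈ Fh, (fun n : ℕ => 1/(n:ℝ)) h.natAbs
        ≤ 2 * ∑ n ∈ Finset.Icc 1 (k-1), (1/(n:ℝ)) := h2
      _ ≤ 2 * (1 + Real.log (k-1:ℕ)) := by linarith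
      _ ≤ 2 * (1 + L) := by linarith
  -- Step C : tail estimate
  set σ2 := ∑ h ∈ Ft, ‖c h‖ ^ 2 with hσdef
  have hσnn : 0 ≤ σ2 := Finset.sum_nonneg fun h _ => by positivity
  -- σ2 ≤ 3 c₀^2 / k
  have hnatabs2 : ∀ h : ℤ, ((h.natAbs : ℕ) : ℝ) = |(h:ℝ)| := by
    intro h
    rw [Nat.cast_natAbs, Int.cast_abs]
  have hσle : σ2 ≤ 3 * c₀^2 / k := by
    have hstep1 : σ2 ≤ ∑ h ∈ Ft, c₀^2 * (fun n : ℕ => 1/(n:ℝ)^2) h.natAbs := by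
      refine Finset.sum_le_sum fun h hh => ?_
      obtain ⟨hne, h1'⟩ := hFne h (Finset.mem_filter.1 hh).1
      have habs0 : (0:ℝ) < |(h:ℝ)| := by linarith
      calc ‖c h‖ ^ 2 ≤ (c₀ / |(h:ℝ)|) ^ 2 :=
            pow_le_pow_left₀ (norm_nonneg _) (hc h hne) 2
        _ = c₀^2 * (1 / |(h:ℝ)|^2) := by rw [div_pow]; ring
        _ = c₀^2 * (fun n : ℕ => 1/(n:ℝ)^2) h.natAbs := by rw [← hnatabs2 h]
    have hmap : ∀ h ∈ Ft, h.natAbs ∈ Finset.Icc k (⌈z⌉.toNat) := by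
      intro h hh
      obtain ⟨hhF, hge⟩ := Finset.mem_filter.1 hh
      push_neg at hge
      have hIcc := (Finset.mem_filter.1 hhF).1
      rw [Finset.mem_Icc] at hIcc
      have hk' : (k:ℝ) ≤ ((h.natAbs : ℕ) : ℝ) := by rw [hnatabs2 h]; exact hge
      have hk'' : k ≤ h.natAbs := by exact_mod_cast hk'
      rw [Finset.mem_Icc]
      constructor
      · exact hk''
      · omega
    have h2 := fiber_sum Ft (Finset.Icc k (⌈z⌉.toNat)) (fun n => 1/(n:ℝ)^2)
      (fun n => by positivity) hmap
    have h3 := sum_inv_sq_le k (⌈z⌉.toNat) hk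
    have h4 : 2 * (1/(k:ℝ)^2 + 1/(k:ℝ)) ≤ 3 / (k:ℝ) := by
      have e2 : 2/(k:ℝ)^2 ≤ 1/(k:ℝ) := by
        rw [div_le_div_iff₀ (by positivity) (by positivity)]
        nlinarith
      have e3 : (3:ℝ)/(k:ℝ) = 1/(k:ℝ) + 2/(k:ℝ) := by ring
      have e1 : 2*(1/(k:ℝ)^2 + 1/(k:ℝ)) = 2/(k:ℝ)^2 + 2/(k:ℝ) := by ring
      linarith
    calc σ2 ≤ ∑ h ∈ Ft, c₀^2 * (fun n : ℕ => 1/(n:ℝ)^2) h.natAbs := hstep1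
      _ = c₀^2 * ∑ h ∈ Ft, (fun n : ℕ => 1/(n:ℝ)^2) h.natAbs := by rw [Finset.mul_sum]
      _ ≤ c₀^2 * (2 * ∑ n ∈ Finset.Icc k (⌈z⌉.toNat), 1/(n:ℝ)^2) := by
          refine mul_le_mul_of_nonneg_left ?_ (by positivity)
          exact h2
      _ ≤ c₀^2 * (2 * (1/(k:ℝ)^2 + 1/(k:ℝ))) := by
          refine mul_le_mul_of_nonneg_left ?_ (by positivity)
          have h2nn : (0:ℝ) ≤ 2 := by norm_num
          refine mul_le_mul_of_nonneg_left ?_ h2nn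
          exact h3
      _ ≤ c₀^2 * (3 / (k:ℝ)) := mul_le_mul_of_nonneg_left h4 (by positivity)
      _ = 3 * c₀^2 / k := by ring
  -- real and imaginary parts
  set PP := fun ω => ∑ h ∈ Ft, (c h).re * X h ω with hPPdef
  set QQ := fun ω => ∑ h ∈ Ft, (c h).im * X h ω with hQQdef
  have hUre : ∀ ω, (U ω).re = PP ω := by
    intro ω
    rw [hUdef, hPPdef]
    rw [Complex.re_sum]
    exact Finset.sum_congr rfl fun h _ => by simp [Complex.mul_re]
  have hUim : ∀ ω, (U ω).im = QQ ω := by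
    intro ω
    rw [hUdef, hQQdef]
    rw [Complex.im_sum]
    exact Finset.sum_congr rfl fun h _ => by simp [Complex.mul_im]
  have habsU : ∀ ω, ‖U ω‖ ^ (2*k) = ((PP ω)^2 + (QQ ω)^2)^k := by
    intro ω
    rw [pow_mul]
    congr 1
    rw [Complex.sq_norm, Complex.normSq_apply, hUre ω, hUim ω]
    ring
  -- integrability of PP^(2k), QQ^(2k)
  have hintP : ∀ (a : ℤ → ℝ) (m : ℕ),
      Integrable (fun ω => (∑ h ∈ Ft, a h * X h ω) ^ m) ℙ := by
    intro a m
    refine intg_of_bdd ((Finset.measurable_sum _ fun h _ =>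
      (measurable_const.mul (hmeas h))).pow_const m).aestronglyMeasurable
      (C := ((∑ h ∈ Ft, |a h|) * N)^m) ?_
    filter_upwards [hall] with ω hω
    rw [abs_pow]
    refine pow_le_pow_left₀ (abs_nonneg _) ?_ _
    calc |∑ h ∈ Ft, a h * X h ω| ≤ ∑ h ∈ Ft, |a h * X h ω| :=
          Finset.abs_sum_le_sum_abs _ _
      _ ≤ ∑ h ∈ Ft, |a h| * N := by
          refine Finset.sum_le_sum fun h _ => ?_
          rw [abs_mul]
          exact mul_le_mul_of_nonneg_left (hω h) (abs_nonneg _)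
      _ = (∑ h ∈ Ft, |a h|) * N := (Finset.sum_mul _ _ _).symm
  -- even moment bounds
  have hmomP : ∫ ω, (PP ω) ^ (2*k) ≤ ((2*k-1)‼ : ℝ) * (N^2 * σ2)^k := by
    calc ∫ ω, (PP ω) ^ (2*k)
        ≤ ((2*k-1)‼ : ℝ) * (N^2 * ∑ h ∈ Ft, (c h).re ^ 2)^k :=
          even_moment N hN.le X hmeas hind hbd hodd Ft (fun h => (c h).re) k
      _ ≤ ((2*k-1)‼ : ℝ) * (N^2 * σ2)^k := by
          refine mul_le_mul_of_nonneg_left ?_ (by positivity)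
          refine pow_le_pow_left₀ (by positivity) ?_ _
          refine mul_le_mul_of_nonneg_left ?_ (sq_nonneg N)
          refine Finset.sum_le_sum fun h _ => ?_
          rw [← sq_abs ((c h).re)]
          exact pow_le_pow_left₀ (abs_nonneg _) (Complex.abs_re_le_norm _) 2
  have hmomQ : ∫ ω, (QQ ω) ^ (2*k) ≤ ((2*k-1)‼ : ℝ) * (N^2 * σ2)^k := by
    calc ∫ ω, (QQ ω) ^ (2*k)
        ≤ ((2*k-1)‼ : ℝ) * (N^2 * ∑ h ∈ Ft, (c h).im ^ 2)^k :=
          even_moment N hN.le X hmeas hind hbd hodd Ft (fun h => (c h).im) k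
      _ ≤ ((2*k-1)‼ : ℝ) * (N^2 * σ2)^k := by
          refine mul_le_mul_of_nonneg_left ?_ (by positivity)
          refine pow_le_pow_left₀ (by positivity) ?_ _
          refine mul_le_mul_of_nonneg_left ?_ (sq_nonneg N)
          refine Finset.sum_le_sum fun h _ => ?_
          rw [← sq_abs ((c h).im)]
          exact pow_le_pow_left₀ (abs_nonneg _) (Complex.abs_im_le_norm _) 2
  -- ∫ |U|^{2k} bound
  have hU2k : ∫ ω, ‖U ω‖ ^ (2*k) ≤ (6 * c₀^2 * N^2)^k := by
    have hpt : ∀ ω, ‖U ω‖ ^ (2*k)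
        ≤ 2^(k-1) * ((PP ω)^(2*k) + (QQ ω)^(2*k)) := by
      intro ω
      rw [habsU ω]
      calc ((PP ω)^2 + (QQ ω)^2)^k
          ≤ 2^(k-1) * (((PP ω)^2)^k + ((QQ ω)^2)^k) :=
            add_pow_le (sq_nonneg _) (sq_nonneg _) _
        _ = 2^(k-1) * ((PP ω)^(2*k) + (QQ ω)^(2*k)) := by
            rw [← pow_mul, ← pow_mul]
    have hintPQ : Integrable (fun ω => 2^(k-1) * ((PP ω)^(2*k) + (QQ ω)^(2*k))) ℙ :=
      (((hintP (fun h => (c h).re) (2*k)).add (hintP (fun h => (c h).im) (2*k))).const_mul _)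
    have h1 : ∫ ω, ‖U ω‖ ^ (2*k)
        ≤ 2^(k-1) * ((∫ ω, (PP ω)^(2*k)) + ∫ ω, (QQ ω)^(2*k)) := by
      calc ∫ ω, ‖U ω‖ ^ (2*k)
          ≤ ∫ ω, 2^(k-1) * ((PP ω)^(2*k) + (QQ ω)^(2*k)) :=
            integral_mono_ae (hint Ft (2*k)) hintPQ (Filter.Eventually.of_forall hpt)
        _ = 2^(k-1) * ((∫ ω, (PP ω)^(2*k)) + ∫ ω, (QQ ω)^(2*k)) := by
            rw [integral_const_mul,
              integral_add (hintP (fun h => (c h).re) (2*k)) (hintP (fun h => (c h).im) (2*k))]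
    have h2 : 2^(k-1) * ((∫ ω, (PP ω)^(2*k)) + ∫ ω, (QQ ω)^(2*k))
        ≤ 2^k * (((2*k-1)‼ : ℝ) * (N^2 * σ2)^k) := by
      have hD : (0:ℝ) ≤ ((2*k-1)‼ : ℝ) * (N^2 * σ2)^k := by positivity
      have hkk : (2:ℝ)^(k-1) * 2 = 2^k := by
        rw [← pow_succ]
        congr 1
        omega
      calc 2^(k-1) * ((∫ ω, (PP ω)^(2*k)) + ∫ ω, (QQ ω)^(2*k))
          ≤ 2^(k-1) * (((2*k-1)‼ : ℝ) * (N^2 * σ2)^k + ((2*k-1)‼ : ℝ) * (N^2 * σ2)^k) := by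
            refine mul_le_mul_of_nonneg_left ?_ (by positivity)
            linarith
        _ = (2^(k-1) * 2) * (((2*k-1)‼ : ℝ) * (N^2 * σ2)^k) := by ring
        _ = 2^k * (((2*k-1)‼ : ℝ) * (N^2 * σ2)^k) := by rw [hkk]
    have h3 : (2:ℝ)^k * (((2*k-1)‼ : ℝ) * (N^2 * σ2)^k) ≤ (6 * c₀^2 * N^2)^k := by
      have hdf := doubleFactorial_le_pow k hk
      have hs1 : (N^2 * σ2)^k ≤ (N^2 * (3 * c₀^2 / k))^k := by
        refine pow_le_pow_left₀ (by positivity) ?_ _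
        exact mul_le_mul_of_nonneg_left hσle (sq_nonneg N)
      have hmain : (2:ℝ)^k * ((k:ℝ)^k * (N^2 * (3 * c₀^2 / k))^k) = (6 * c₀^2 * N^2)^k := by
        rw [← mul_pow, ← mul_pow]
        congr 1
        field_simp
        ring
      calc (2:ℝ)^k * (((2*k-1)‼ : ℝ) * (N^2 * σ2)^k)
          ≤ (2:ℝ)^k * ((k:ℝ)^k * (N^2 * (3 * c₀^2 / k))^k) := by
            refine mul_le_mul_of_nonneg_left ?_ (by positivity)
            refine mul_le_mul hdf hs1 (by positivity) (by positivity)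
        _ = (6 * c₀^2 * N^2)^k := hmain
    linarith
  -- Cauchy-Schwarz to get ∫ |U|^k
  have htailint : ∫ ω, ‖U ω‖ ^ k ≤ (Real.sqrt 6 * (c₀ * N)) ^ k := by
    set B := Real.sqrt 6 * (c₀ * N) with hBdef
    have hBnn : 0 ≤ B := by positivity
    have hB2 : B^2 = 6 * c₀^2 * N^2 := by
      rw [hBdef, mul_pow, Real.sq_sqrt (by norm_num : (0:ℝ) ≤ 6)]
      ring
    have hcs : (∫ ω, ‖U ω‖ ^ k)^2 ≤ ∫ ω, (‖U ω‖ ^ k)^2 := by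
      refine sq_integral_le (hmabs Ft k) (C := ((∑ h ∈ Ft, ‖c h‖) * N)^k) ?_
      filter_upwards [habs Ft] with ω hω
      rw [abs_of_nonneg (pow_nonneg (norm_nonneg _) _)]
      exact pow_le_pow_left₀ (norm_nonneg _) hω _
    have heq : ∫ ω, (‖U ω‖ ^ k)^2 = ∫ ω, ‖U ω‖ ^ (2*k) := by
      refine integral_congr_ae (Filter.Eventually.of_forall fun ω => ?_)
      show (‖U ω‖ ^ k)^2 = ‖U ω‖ ^ (2*k)
      rw [← pow_mul, mul_comm]
    have h4 : (∫ ω, ‖U ω‖ ^ k)^2 ≤ (B^k)^2 := by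
      calc (∫ ω, ‖U ω‖ ^ k)^2 ≤ ∫ ω, ‖U ω‖ ^ (2*k) := by
            rw [← heq]; exact hcs
        _ ≤ (6 * c₀^2 * N^2)^k := hU2k
        _ = (B^k)^2 := by rw [← pow_mul, mul_comm k 2, pow_mul, hB2]
    have h5 : 0 ≤ ∫ ω, ‖U ω‖ ^ k :=
      integral_nonneg fun ω => pow_nonneg (norm_nonneg _) _
    calc ∫ ω, ‖U ω‖ ^ k
        = Real.sqrt ((∫ ω, ‖U ω‖ ^ k)^2) := (Real.sqrt_sq h5).symm
      _ ≤ Real.sqrt ((B^k)^2) := Real.sqrt_le_sqrt h4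
      _ = B^k := Real.sqrt_sq (pow_nonneg hBnn _)
  -- Final arithmetic
  set W := 5 * c₀ * N * L with hWdef
  have hWpos : 0 < W := by positivity
  have hA : c₀ * N * HSum ≤ W := by
    have h1 : c₀ * N * HSum ≤ c₀ * N * (2 * (1 + L)) :=
      mul_le_mul_of_nonneg_left hHSle (by positivity)
    have h2 : 2 * (1 + L) ≤ 5 * L := by linarith
    calc c₀ * N * HSum ≤ c₀ * N * (2 * (1 + L)) := h1
      _ ≤ c₀ * N * (5 * L) := mul_le_mul_of_nonneg_left h2 (by positivity)
      _ = W := by rw [hWdef]; ring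
  have hBW : Real.sqrt 6 * (c₀ * N) ≤ W := by
    have hs6 : Real.sqrt 6 ≤ 5/2 := by
      have h1 : Real.sqrt 6 ≤ Real.sqrt ((5/2)^2) := Real.sqrt_le_sqrt (by norm_num)
      rwa [Real.sqrt_sq (by norm_num : (0:ℝ) ≤ 5/2)] at h1
    have hL12 : (1:ℝ)/2 ≤ L := by linarith
    rw [hWdef]
    nlinarith
  have hSk : ∫ ω, ‖S ω‖ ^ k ≤ W^k :=
    le_trans hheadint (pow_le_pow_left₀ (by positivity) hA _)
  have hUk : ∫ ω, ‖U ω‖ ^ k ≤ W^k :=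
    le_trans htailint (pow_le_pow_left₀ (by positivity) hBW _)
  have hkk : (2:ℝ)^(k-1) * 2 = 2^k := by
    rw [← pow_succ]
    congr 1
    omega
  calc ∫ ω, ‖∑ h ∈ F, c h * (X h ω : ℂ)‖ ^ k
      ≤ 2^(k-1) * ((∫ ω, ‖S ω‖ ^ k) + ∫ ω, ‖U ω‖ ^ k) := stepA
    _ ≤ 2^(k-1) * (W^k + W^k) := by
        refine mul_le_mul_of_nonneg_left ?_ (by positivity)
        linarith
    _ = (2^(k-1) * 2) * W^k := by ring
    _ = 2^k * W^k := by rw [hkk]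
    _ = (2 * W)^k := (mul_pow 2 W k).symm
    _ = (10 * c₀ * N * L) ^ k := by
        congr 1
        rw [hWdef]
        ring
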